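/- The three two-dimensional abelian subalgebras ℂX_α⊕ℂX_{3α+β}, ℂX_β⊕ℂX_{3α+2β} and ℂX_α⊕ℂX_{3α+2β} of G₂ are pairwise non-conjugate: no Lie algebra automorphism of G₂ maps any one of them onto another. -/
import Mathlib


namespace G2Formal

/-- The positive roots of `G₂`: the pair `(k, l)` encodes `k•α + l•β`,
where `α` is the short simple root and `β` is the long simple root. -/
def PhiP : Set (ℤ × ℤ) := {(1,0), (0,1), (1,1), (2,1), (3,1), (3,2)}

/-- All twelve roots of `G₂`. -/
def Phi : Set (ℤ × ℤ) :=
  {(1,0), (0,1), (1,1), (2,1), (3,1), (3,2),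
   (-1,0), (0,-1), (-1,-1), (-2,-1), (-3,-1), (-3,-2)}

/-- The invariant inner product on the root space, normalized by `(α,α) = 1`,
`(β,β) = 3`, `(α,β) = -3/2`. -/
def ip (μ ν : ℤ × ℤ) : ℚ :=
  (μ.1 * ν.1 : ℤ) - (3/2 : ℚ) * ((μ.1 * ν.2 + μ.2 * ν.1 : ℤ)) + 3 * ((μ.2 * ν.2 : ℤ) : ℚ)

/-- The Cartan pairing `⟨ν, μ^∨⟩ = 2(μ,ν)/(μ,μ)`. -/
def cart (μ ν : ℤ × ℤ) : ℚ := 2 * ip μ ν / ip μ μ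

/-- Base table of structure constants `N_{μ,ν}` from the multiplication table of `G₂`. -/
def N0 (μ ν : ℤ × ℤ) : ℤ :=
  if μ = (0,1) ∧ ν = (1,0) then 1
  else if μ = (0,1) ∧ ν = (3,1) then 1
  else if μ = (3,1) ∧ ν = (-3,-2) then 1
  else if μ = (2,1) ∧ ν = (-3,-1) then 1
  else if μ = (2,1) ∧ ν = (-3,-2) then 1
  else if μ = (-3,-2) ∧ ν = (1,1) then 1
  else if μ = (-3,-2) ∧ ν = (0,1) then 1
  else if μ = (-3,-1) ∧ ν = (1,0) then 1
  else if μ = (-1,-1) ∧ ν = (0,1) then 1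
  else if μ = (1,1) ∧ ν = (1,0) then 2
  else if μ = (1,0) ∧ ν = (-2,-1) then 2
  else if μ = (-2,-1) ∧ ν = (1,1) then 2
  else if μ = (1,0) ∧ ν = (2,1) then 3
  else if μ = (1,0) ∧ ν = (-1,-1) then 3
  else if μ = (1,1) ∧ ν = (2,1) then 3
  else 0

/-- The full table of structure constants, obtained from the base table via
`N_{μ,ν} = -N_{ν,μ} = -N_{-μ,-ν}`. -/
def Nc (μ ν : ℤ × ℤ) : ℤ := N0 μ ν - N0 ν μ - N0 (-μ) (-ν) + N0 (-ν) (-μ)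

variable {L : Type*} [LieRing L] [LieAlgebra ℂ L]

/-- The coroot `H_μ` expressed in the basis `H_α`, `H_β` of the Cartan subalgebra. -/
noncomputable def Hr (Hα Hβ : L) (μ : ℤ × ℤ) : L :=
  ((((μ.1 : ℚ) / ip μ μ : ℚ) : ℂ)) • Hα + ((((3 * μ.2 : ℚ) / ip μ μ : ℚ) : ℂ)) • Hβ

/-- The Chevalley basis of `G₂` as a family indexed by `Fin 14`. -/
def chev (Hα Hβ : L) (X : ℤ × ℤ → L) : Fin 14 → L :=
  ![Hα, Hβ, X (1,0), X (-1,0), X (0,1), X (0,-1), X (1,1), X (-1,-1),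
    X (2,1), X (-2,-1), X (3,1), X (-3,-1), X (3,2), X (-3,-2)]

/-- `IsG2 Hα Hβ X` says that the complex Lie algebra `L`, together with the elements
`Hα`, `Hβ` and the root vectors `X γ` (for `γ` a root of `G₂`), realizes the multiplication
table of the simple complex Lie algebra of type `G₂` in its Chevalley basis, and that the
fourteen Chevalley basis vectors form a basis of `L`.  Any such `L` is a copy of `G₂`. -/
structure IsG2 (Hα Hβ : L) (X : ℤ × ℤ → L) : Prop where
  indep : LinearIndependent ℂ (chev Hα Hβ X)
  span_top : Submodule.span ℂ (Set.range (chev Hα Hβ X)) = ⊤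
  bracket_hh : ⁅Hα, Hβ⁆ = 0
  bracket_hx : ∀ μ ∈ Phi, ∀ ν ∈ Phi, ⁅Hr Hα Hβ μ, X ν⁆ = ((cart μ ν : ℚ) : ℂ) • X ν
  bracket_xnegx : ∀ μ ∈ Phi, ⁅X μ, X (-μ)⁆ = Hr Hα Hβ μ
  bracket_xx : ∀ μ ∈ Phi, ∀ ν ∈ Phi, μ + ν ∈ Phi →
    ⁅X μ, X ν⁆ = ((Nc μ ν : ℤ) : ℂ) • X (μ + ν)
  bracket_xx_zero : ∀ μ ∈ Phi, ∀ ν ∈ Phi, μ + ν ≠ 0 → μ + ν ∉ Phi → ⁅X μ, X ν⁆ = 0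

/-- Two Lie subalgebras of `L` are conjugate if some Lie algebra automorphism of `L`
maps one onto the other. -/
def SubalgConj (g k : LieSubalgebra ℂ L) : Prop :=
  ∃ s : L ≃ₗ⁅ℂ⁆ L, g.map s.toLieHom = k

/-- A submodule is conjugate (as a subalgebra) to a given submodule if some Lie algebra
automorphism of `L` maps it onto the latter. -/
def ModConj (W W' : Submodule ℂ L) : Prop :=
  ∃ s : L ≃ₗ⁅ℂ⁆ L, W.map (s.toLinearEquiv : L →ₗ[ℂ] L) = W'

/-- A Lie subalgebra of `G₂` is *regular* if it is conjugate to a subalgebra of the form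
`g(Σ, W) = W ⊕ ⊕_{γ ∈ Σ} ℂ X_γ` where `Σ ⊆ Φ` is closed and `W` is a subspace of the
Cartan subalgebra containing `[X_γ, X_{-γ}]` for every `γ ∈ Σ ∩ (-Σ)`. -/
def IsRegularSubalgebra (Hα Hβ : L) (X : ℤ × ℤ → L) (g : LieSubalgebra ℂ L) : Prop :=
  ∃ (S : Set (ℤ × ℤ)) (W : Submodule ℂ L) (k : LieSubalgebra ℂ L),
    S ⊆ Phi ∧
    (∀ x ∈ S, ∀ y ∈ S, x + y ∈ Phi → x + y ∈ S) ∧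
    W ≤ Submodule.span ℂ {Hα, Hβ} ∧
    (∀ γ ∈ S, -γ ∈ S → ⁅X γ, X (-γ)⁆ ∈ W) ∧
    k.toSubmodule = W ⊔ Submodule.span ℂ (X '' S) ∧
    SubalgConj g k

/-- A Levi subalgebra of a Lie algebra `g`: a semisimple subalgebra which is a vector
space complement of the solvable radical. -/
def IsLeviOf (g : LieSubalgebra ℂ L) (m : LieSubalgebra ℂ ↥g) : Prop :=
  LieAlgebra.IsSemisimple ℂ ↥m ∧
  IsCompl m.toSubmodule (LieAlgebra.radical ℂ ↥g).toSubmodule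


variable {L : Type*} [LieRing L] [LieAlgebra ℂ L]

/-- The three two-dimensional abelian nilpotent subalgebras
`ℂX_α ⊕ ℂX_{3α+β}`, `ℂX_β ⊕ ℂX_{3α+2β}` and `ℂX_α ⊕ ℂX_{3α+2β}` of `G₂`. -/
def abelianPair (X : ℤ × ℤ → L) : Fin 3 → Submodule ℂ L :=
  ![Submodule.span ℂ {X (1,0), X (3,1)},
    Submodule.span ℂ {X (0,1), X (3,2)},
    Submodule.span ℂ {X (1,0), X (3,2)}]



section Aux
variable {L : Type*} [LieRing L] [LieAlgebra ℂ L] {Hα Hβ : L} {X : ℤ × ℤ → L}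

/-- The span of all brackets `⁅x, w⁆` with `w` in `W`; a conjugation invariant. -/
def bspan (W : Submodule ℂ L) : Submodule ℂ L :=
  Submodule.span ℂ {z | ∃ (x : L) (w : L), w ∈ W ∧ z = ⁅x, w⁆}

lemma bspan_conj (s : L ≃ₗ⁅ℂ⁆ L) (W : Submodule ℂ L) :
    (bspan W).map (s.toLinearEquiv : L →ₗ[ℂ] L)
      = bspan (W.map (s.toLinearEquiv : L →ₗ[ℂ] L)) := by
  rw [bspan, Submodule.map_span]
  congr 1
  ext z
  constructor
  · rintro ⟨y, ⟨x, w, hw, rfl⟩, rfl⟩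
    exact ⟨s x, s w, Submodule.mem_map_of_mem hw, by exact s.map_lie x w⟩
  · rintro ⟨x, w, ⟨w₀, hw₀, rfl⟩, rfl⟩
    exact ⟨⁅s.symm x, w₀⁆, ⟨s.symm x, w₀, hw₀, rfl⟩, by
      show s ⁅s.symm x, w₀⁆ = ⁅x, s w₀⁆
      rw [LieEquiv.map_lie, LieEquiv.apply_symm_apply]⟩

lemma modconj_finrank {W W' : Submodule ℂ L} (h : ModConj W W') :
    Module.finrank ℂ (bspan W) = Module.finrank ℂ (bspan W') := by
  obtain ⟨s, hs⟩ := h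
  rw [← hs, ← bspan_conj, LinearEquiv.finrank_map_eq]

set_option linter.unusedSectionVars false in
lemma range_chev : Set.range (chev Hα Hβ X) =
    {Hα, Hβ, X (1,0), X (-1,0), X (0,1), X (0,-1), X (1,1), X (-1,-1),
     X (2,1), X (-2,-1), X (3,1), X (-3,-1), X (3,2), X (-3,-2)} := by
  ext x; simp [chev, Matrix.range_cons, Matrix.range_empty]; tauto

lemma ad_mem (hG2 : IsG2 Hα Hβ X) (u : L) (V : Submodule ℂ L)
    (h : ∀ y ∈ Set.range (chev Hα Hβ X), ⁅y, u⁆ ∈ V) : ∀ x : L, ⁅x, u⁆ ∈ V := by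
  intro x
  have hx : x ∈ Submodule.span ℂ (Set.range (chev Hα Hβ X)) := by
    rw [hG2.span_top]; trivial
  induction hx using Submodule.span_induction with
  | mem y hy => exact h y hy
  | zero => simp
  | add a b _ _ ha hb => rw [add_lie]; exact add_mem ha hb
  | smul c a _ ha => rw [smul_lie]; exact V.smul_mem c ha

lemma memP0 : ((1,0) : ℤ × ℤ) ∈ Phi := by simp [Phi]
lemma memP1 : ((-1,0) : ℤ × ℤ) ∈ Phi := by simp [Phi]
lemma memP2 : ((0,1) : ℤ × ℤ) ∈ Phi := by simp [Phi]
lemma memP3 : ((0,-1) : ℤ × ℤ) ∈ Phi := by simp [Phi]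
lemma memP4 : ((1,1) : ℤ × ℤ) ∈ Phi := by simp [Phi]
lemma memP5 : ((-1,-1) : ℤ × ℤ) ∈ Phi := by simp [Phi]
lemma memP6 : ((2,1) : ℤ × ℤ) ∈ Phi := by simp [Phi]
lemma memP7 : ((-2,-1) : ℤ × ℤ) ∈ Phi := by simp [Phi]
lemma memP8 : ((3,1) : ℤ × ℤ) ∈ Phi := by simp [Phi]
lemma memP9 : ((-3,-1) : ℤ × ℤ) ∈ Phi := by simp [Phi]
lemma memP10 : ((3,2) : ℤ × ℤ) ∈ Phi := by simp [Phi]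
lemma memP11 : ((-3,-2) : ℤ × ℤ) ∈ Phi := by simp [Phi]

lemma nmemP0 : ((-3,0) : ℤ × ℤ) ∉ Phi := by simp [Phi]
lemma nmemP1 : ((-2,-2) : ℤ × ℤ) ∉ Phi := by simp [Phi]
lemma nmemP2 : ((-2,0) : ℤ × ℤ) ∉ Phi := by simp [Phi]
lemma nmemP3 : ((-1,1) : ℤ × ℤ) ∉ Phi := by simp [Phi]
lemma nmemP4 : ((0,2) : ℤ × ℤ) ∉ Phi := by simp [Phi]
lemma nmemP5 : ((1,-1) : ℤ × ℤ) ∉ Phi := by simp [Phi]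
lemma nmemP6 : ((1,2) : ℤ × ℤ) ∉ Phi := by simp [Phi]
lemma nmemP7 : ((2,0) : ℤ × ℤ) ∉ Phi := by simp [Phi]
lemma nmemP8 : ((2,2) : ℤ × ℤ) ∉ Phi := by simp [Phi]
lemma nmemP9 : ((3,0) : ℤ × ℤ) ∉ Phi := by simp [Phi]
lemma nmemP10 : ((3,3) : ℤ × ℤ) ∉ Phi := by simp [Phi]
lemma nmemP11 : ((4,1) : ℤ × ℤ) ∉ Phi := by simp [Phi]
lemma nmemP12 : ((4,2) : ℤ × ℤ) ∉ Phi := by simp [Phi]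
lemma nmemP13 : ((4,3) : ℤ × ℤ) ∉ Phi := by simp [Phi]
lemma nmemP14 : ((5,2) : ℤ × ℤ) ∉ Phi := by simp [Phi]
lemma nmemP15 : ((5,3) : ℤ × ℤ) ∉ Phi := by simp [Phi]
lemma nmemP16 : ((6,2) : ℤ × ℤ) ∉ Phi := by simp [Phi]
lemma nmemP17 : ((6,3) : ℤ × ℤ) ∉ Phi := by simp [Phi]
lemma nmemP18 : ((6,4) : ℤ × ℤ) ∉ Phi := by simp [Phi]

lemma HrA : Hr Hα Hβ ((1,0) : ℤ × ℤ) = Hα := by norm_num [Hr, ip]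
lemma HrB : Hr Hα Hβ ((0,1) : ℤ × ℤ) = Hβ := by norm_num [Hr, ip]

lemma ev_0_a (hG2 : IsG2 Hα Hβ X) : ⁅Hα, X (1,0)⁆ = (2:ℂ) • X (1,0) := by
  have h := hG2.bracket_hx (1,0) memP0 (1,0) memP0
  rw [HrA,
    show ((cart (1,0) (1,0) : ℚ) : ℂ) = (2:ℂ) from by norm_num [cart, ip]] at h
  exact h

lemma ev_1_a (hG2 : IsG2 Hα Hβ X) : ⁅Hβ, X (1,0)⁆ = (-1:ℂ) • X (1,0) := by
  have h := hG2.bracket_hx (0,1) memP2 (1,0) memP0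
  rw [HrB,
    show ((cart (0,1) (1,0) : ℚ) : ℂ) = (-1:ℂ) from by norm_num [cart, ip]] at h
  exact h

lemma ev_2_a (hG2 : IsG2 Hα Hβ X) : ⁅X (1,0), X (1,0)⁆ = 0 :=
  hG2.bracket_xx_zero (1,0) memP0 (1,0) memP0 (by decide)
    (by rw [show ((1,0)+(1,0):ℤ×ℤ) = (2,0) from by decide]; exact nmemP7)

lemma ev_3_a (hG2 : IsG2 Hα Hβ X) : ⁅X (-1,0), X (1,0)⁆ = (-1:ℂ) • Hα + (0:ℂ) • Hβ := by
  have h := hG2.bracket_xnegx (-1,0) memP1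
  rw [show (-((-1,0)):ℤ×ℤ) = ((1,0):ℤ×ℤ) from by decide] at h
  rw [h]
  norm_num [Hr, ip]
  all_goals module

lemma ev_4_a (hG2 : IsG2 Hα Hβ X) : ⁅X (0,1), X (1,0)⁆ = (1:ℂ) • X (1,1) := by
  have h := hG2.bracket_xx (0,1) memP2 (1,0) memP0
    (by rw [show ((0,1)+(1,0):ℤ×ℤ) = (1,1) from by decide]; exact memP4)
  rw [show ((0,1)+(1,0):ℤ×ℤ) = (1,1) from by decide] at h
  rw [h, show Nc (0,1) (1,0) = 1 from by decide]
  norm_num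

lemma ev_5_a (hG2 : IsG2 Hα Hβ X) : ⁅X (0,-1), X (1,0)⁆ = 0 :=
  hG2.bracket_xx_zero (0,-1) memP3 (1,0) memP0 (by decide)
    (by rw [show ((0,-1)+(1,0):ℤ×ℤ) = (1,-1) from by decide]; exact nmemP5)

lemma ev_6_a (hG2 : IsG2 Hα Hβ X) : ⁅X (1,1), X (1,0)⁆ = (2:ℂ) • X (2,1) := by
  have h := hG2.bracket_xx (1,1) memP4 (1,0) memP0
    (by rw [show ((1,1)+(1,0):ℤ×ℤ) = (2,1) from by decide]; exact memP6)
  rw [show ((1,1)+(1,0):ℤ×ℤ) = (2,1) from by decide] at h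
  rw [h, show Nc (1,1) (1,0) = 2 from by decide]
  norm_num

lemma ev_7_a (hG2 : IsG2 Hα Hβ X) : ⁅X (-1,-1), X (1,0)⁆ = (-3:ℂ) • X (0,-1) := by
  have h := hG2.bracket_xx (-1,-1) memP5 (1,0) memP0
    (by rw [show ((-1,-1)+(1,0):ℤ×ℤ) = (0,-1) from by decide]; exact memP3)
  rw [show ((-1,-1)+(1,0):ℤ×ℤ) = (0,-1) from by decide] at h
  rw [h, show Nc (-1,-1) (1,0) = -3 from by decide]
  norm_num

lemma ev_8_a (hG2 : IsG2 Hα Hβ X) : ⁅X (2,1), X (1,0)⁆ = (-3:ℂ) • X (3,1) := by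
  have h := hG2.bracket_xx (2,1) memP6 (1,0) memP0
    (by rw [show ((2,1)+(1,0):ℤ×ℤ) = (3,1) from by decide]; exact memP8)
  rw [show ((2,1)+(1,0):ℤ×ℤ) = (3,1) from by decide] at h
  rw [h, show Nc (2,1) (1,0) = -3 from by decide]
  norm_num

lemma ev_9_a (hG2 : IsG2 Hα Hβ X) : ⁅X (-2,-1), X (1,0)⁆ = (-2:ℂ) • X (-1,-1) := by
  have h := hG2.bracket_xx (-2,-1) memP7 (1,0) memP0
    (by rw [show ((-2,-1)+(1,0):ℤ×ℤ) = (-1,-1) from by decide]; exact memP5)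
  rw [show ((-2,-1)+(1,0):ℤ×ℤ) = (-1,-1) from by decide] at h
  rw [h, show Nc (-2,-1) (1,0) = -2 from by decide]
  norm_num

lemma ev_10_a (hG2 : IsG2 Hα Hβ X) : ⁅X (3,1), X (1,0)⁆ = 0 :=
  hG2.bracket_xx_zero (3,1) memP8 (1,0) memP0 (by decide)
    (by rw [show ((3,1)+(1,0):ℤ×ℤ) = (4,1) from by decide]; exact nmemP11)

lemma ev_11_a (hG2 : IsG2 Hα Hβ X) : ⁅X (-3,-1), X (1,0)⁆ = (1:ℂ) • X (-2,-1) := by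
  have h := hG2.bracket_xx (-3,-1) memP9 (1,0) memP0
    (by rw [show ((-3,-1)+(1,0):ℤ×ℤ) = (-2,-1) from by decide]; exact memP7)
  rw [show ((-3,-1)+(1,0):ℤ×ℤ) = (-2,-1) from by decide] at h
  rw [h, show Nc (-3,-1) (1,0) = 1 from by decide]
  norm_num

lemma ev_12_a (hG2 : IsG2 Hα Hβ X) : ⁅X (3,2), X (1,0)⁆ = 0 :=
  hG2.bracket_xx_zero (3,2) memP10 (1,0) memP0 (by decide)
    (by rw [show ((3,2)+(1,0):ℤ×ℤ) = (4,2) from by decide]; exact nmemP12)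

lemma ev_13_a (hG2 : IsG2 Hα Hβ X) : ⁅X (-3,-2), X (1,0)⁆ = 0 :=
  hG2.bracket_xx_zero (-3,-2) memP11 (1,0) memP0 (by decide)
    (by rw [show ((-3,-2)+(1,0):ℤ×ℤ) = (-2,-2) from by decide]; exact nmemP1)

lemma ev_0_b (hG2 : IsG2 Hα Hβ X) : ⁅Hα, X (3,1)⁆ = (3:ℂ) • X (3,1) := by
  have h := hG2.bracket_hx (1,0) memP0 (3,1) memP8
  rw [HrA,
    show ((cart (1,0) (3,1) : ℚ) : ℂ) = (3:ℂ) from by norm_num [cart, ip]] at h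
  exact h

lemma ev_1_b (hG2 : IsG2 Hα Hβ X) : ⁅Hβ, X (3,1)⁆ = (-1:ℂ) • X (3,1) := by
  have h := hG2.bracket_hx (0,1) memP2 (3,1) memP8
  rw [HrB,
    show ((cart (0,1) (3,1) : ℚ) : ℂ) = (-1:ℂ) from by norm_num [cart, ip]] at h
  exact h

lemma ev_2_b (hG2 : IsG2 Hα Hβ X) : ⁅X (1,0), X (3,1)⁆ = 0 :=
  hG2.bracket_xx_zero (1,0) memP0 (3,1) memP8 (by decide)
    (by rw [show ((1,0)+(3,1):ℤ×ℤ) = (4,1) from by decide]; exact nmemP11)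

lemma ev_3_b (hG2 : IsG2 Hα Hβ X) : ⁅X (-1,0), X (3,1)⁆ = (1:ℂ) • X (2,1) := by
  have h := hG2.bracket_xx (-1,0) memP1 (3,1) memP8
    (by rw [show ((-1,0)+(3,1):ℤ×ℤ) = (2,1) from by decide]; exact memP6)
  rw [show ((-1,0)+(3,1):ℤ×ℤ) = (2,1) from by decide] at h
  rw [h, show Nc (-1,0) (3,1) = 1 from by decide]
  norm_num

lemma ev_4_b (hG2 : IsG2 Hα Hβ X) : ⁅X (0,1), X (3,1)⁆ = (1:ℂ) • X (3,2) := by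
  have h := hG2.bracket_xx (0,1) memP2 (3,1) memP8
    (by rw [show ((0,1)+(3,1):ℤ×ℤ) = (3,2) from by decide]; exact memP10)
  rw [show ((0,1)+(3,1):ℤ×ℤ) = (3,2) from by decide] at h
  rw [h, show Nc (0,1) (3,1) = 1 from by decide]
  norm_num

lemma ev_5_b (hG2 : IsG2 Hα Hβ X) : ⁅X (0,-1), X (3,1)⁆ = 0 :=
  hG2.bracket_xx_zero (0,-1) memP3 (3,1) memP8 (by decide)
    (by rw [show ((0,-1)+(3,1):ℤ×ℤ) = (3,0) from by decide]; exact nmemP9)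

lemma ev_6_b (hG2 : IsG2 Hα Hβ X) : ⁅X (1,1), X (3,1)⁆ = 0 :=
  hG2.bracket_xx_zero (1,1) memP4 (3,1) memP8 (by decide)
    (by rw [show ((1,1)+(3,1):ℤ×ℤ) = (4,2) from by decide]; exact nmemP12)

lemma ev_7_b (hG2 : IsG2 Hα Hβ X) : ⁅X (-1,-1), X (3,1)⁆ = 0 :=
  hG2.bracket_xx_zero (-1,-1) memP5 (3,1) memP8 (by decide)
    (by rw [show ((-1,-1)+(3,1):ℤ×ℤ) = (2,0) from by decide]; exact nmemP7)

lemma ev_8_b (hG2 : IsG2 Hα Hβ X) : ⁅X (2,1), X (3,1)⁆ = 0 :=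
  hG2.bracket_xx_zero (2,1) memP6 (3,1) memP8 (by decide)
    (by rw [show ((2,1)+(3,1):ℤ×ℤ) = (5,2) from by decide]; exact nmemP14)

lemma ev_9_b (hG2 : IsG2 Hα Hβ X) : ⁅X (-2,-1), X (3,1)⁆ = (-1:ℂ) • X (1,0) := by
  have h := hG2.bracket_xx (-2,-1) memP7 (3,1) memP8
    (by rw [show ((-2,-1)+(3,1):ℤ×ℤ) = (1,0) from by decide]; exact memP0)
  rw [show ((-2,-1)+(3,1):ℤ×ℤ) = (1,0) from by decide] at h
  rw [h, show Nc (-2,-1) (3,1) = -1 from by decide]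
  norm_num

lemma ev_10_b (hG2 : IsG2 Hα Hβ X) : ⁅X (3,1), X (3,1)⁆ = 0 :=
  hG2.bracket_xx_zero (3,1) memP8 (3,1) memP8 (by decide)
    (by rw [show ((3,1)+(3,1):ℤ×ℤ) = (6,2) from by decide]; exact nmemP16)

lemma ev_11_b (hG2 : IsG2 Hα Hβ X) : ⁅X (-3,-1), X (3,1)⁆ = (-1:ℂ) • Hα + (-1:ℂ) • Hβ := by
  have h := hG2.bracket_xnegx (-3,-1) memP9
  rw [show (-((-3,-1)):ℤ×ℤ) = ((3,1):ℤ×ℤ) from by decide] at h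
  rw [h]
  norm_num [Hr, ip]
  all_goals module

lemma ev_12_b (hG2 : IsG2 Hα Hβ X) : ⁅X (3,2), X (3,1)⁆ = 0 :=
  hG2.bracket_xx_zero (3,2) memP10 (3,1) memP8 (by decide)
    (by rw [show ((3,2)+(3,1):ℤ×ℤ) = (6,3) from by decide]; exact nmemP17)

lemma ev_13_b (hG2 : IsG2 Hα Hβ X) : ⁅X (-3,-2), X (3,1)⁆ = (-1:ℂ) • X (0,-1) := by
  have h := hG2.bracket_xx (-3,-2) memP11 (3,1) memP8
    (by rw [show ((-3,-2)+(3,1):ℤ×ℤ) = (0,-1) from by decide]; exact memP3)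
  rw [show ((-3,-2)+(3,1):ℤ×ℤ) = (0,-1) from by decide] at h
  rw [h, show Nc (-3,-2) (3,1) = -1 from by decide]
  norm_num

lemma ev_0_c (hG2 : IsG2 Hα Hβ X) : ⁅Hα, X (0,1)⁆ = (-3:ℂ) • X (0,1) := by
  have h := hG2.bracket_hx (1,0) memP0 (0,1) memP2
  rw [HrA,
    show ((cart (1,0) (0,1) : ℚ) : ℂ) = (-3:ℂ) from by norm_num [cart, ip]] at h
  exact h

lemma ev_1_c (hG2 : IsG2 Hα Hβ X) : ⁅Hβ, X (0,1)⁆ = (2:ℂ) • X (0,1) := by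
  have h := hG2.bracket_hx (0,1) memP2 (0,1) memP2
  rw [HrB,
    show ((cart (0,1) (0,1) : ℚ) : ℂ) = (2:ℂ) from by norm_num [cart, ip]] at h
  exact h

lemma ev_2_c (hG2 : IsG2 Hα Hβ X) : ⁅X (1,0), X (0,1)⁆ = (-1:ℂ) • X (1,1) := by
  have h := hG2.bracket_xx (1,0) memP0 (0,1) memP2
    (by rw [show ((1,0)+(0,1):ℤ×ℤ) = (1,1) from by decide]; exact memP4)
  rw [show ((1,0)+(0,1):ℤ×ℤ) = (1,1) from by decide] at h
  rw [h, show Nc (1,0) (0,1) = -1 from by decide]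
  norm_num

lemma ev_3_c (hG2 : IsG2 Hα Hβ X) : ⁅X (-1,0), X (0,1)⁆ = 0 :=
  hG2.bracket_xx_zero (-1,0) memP1 (0,1) memP2 (by decide)
    (by rw [show ((-1,0)+(0,1):ℤ×ℤ) = (-1,1) from by decide]; exact nmemP3)

lemma ev_4_c (hG2 : IsG2 Hα Hβ X) : ⁅X (0,1), X (0,1)⁆ = 0 :=
  hG2.bracket_xx_zero (0,1) memP2 (0,1) memP2 (by decide)
    (by rw [show ((0,1)+(0,1):ℤ×ℤ) = (0,2) from by decide]; exact nmemP4)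

lemma ev_5_c (hG2 : IsG2 Hα Hβ X) : ⁅X (0,-1), X (0,1)⁆ = (0:ℂ) • Hα + (-1:ℂ) • Hβ := by
  have h := hG2.bracket_xnegx (0,-1) memP3
  rw [show (-((0,-1)):ℤ×ℤ) = ((0,1):ℤ×ℤ) from by decide] at h
  rw [h]
  norm_num [Hr, ip]
  all_goals module

lemma ev_6_c (hG2 : IsG2 Hα Hβ X) : ⁅X (1,1), X (0,1)⁆ = 0 :=
  hG2.bracket_xx_zero (1,1) memP4 (0,1) memP2 (by decide)
    (by rw [show ((1,1)+(0,1):ℤ×ℤ) = (1,2) from by decide]; exact nmemP6)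

lemma ev_7_c (hG2 : IsG2 Hα Hβ X) : ⁅X (-1,-1), X (0,1)⁆ = (1:ℂ) • X (-1,0) := by
  have h := hG2.bracket_xx (-1,-1) memP5 (0,1) memP2
    (by rw [show ((-1,-1)+(0,1):ℤ×ℤ) = (-1,0) from by decide]; exact memP1)
  rw [show ((-1,-1)+(0,1):ℤ×ℤ) = (-1,0) from by decide] at h
  rw [h, show Nc (-1,-1) (0,1) = 1 from by decide]
  norm_num

lemma ev_8_c (hG2 : IsG2 Hα Hβ X) : ⁅X (2,1), X (0,1)⁆ = 0 :=
  hG2.bracket_xx_zero (2,1) memP6 (0,1) memP2 (by decide)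
    (by rw [show ((2,1)+(0,1):ℤ×ℤ) = (2,2) from by decide]; exact nmemP8)

lemma ev_9_c (hG2 : IsG2 Hα Hβ X) : ⁅X (-2,-1), X (0,1)⁆ = 0 :=
  hG2.bracket_xx_zero (-2,-1) memP7 (0,1) memP2 (by decide)
    (by rw [show ((-2,-1)+(0,1):ℤ×ℤ) = (-2,0) from by decide]; exact nmemP2)

lemma ev_10_c (hG2 : IsG2 Hα Hβ X) : ⁅X (3,1), X (0,1)⁆ = (-1:ℂ) • X (3,2) := by
  have h := hG2.bracket_xx (3,1) memP8 (0,1) memP2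
    (by rw [show ((3,1)+(0,1):ℤ×ℤ) = (3,2) from by decide]; exact memP10)
  rw [show ((3,1)+(0,1):ℤ×ℤ) = (3,2) from by decide] at h
  rw [h, show Nc (3,1) (0,1) = -1 from by decide]
  norm_num

lemma ev_11_c (hG2 : IsG2 Hα Hβ X) : ⁅X (-3,-1), X (0,1)⁆ = 0 :=
  hG2.bracket_xx_zero (-3,-1) memP9 (0,1) memP2 (by decide)
    (by rw [show ((-3,-1)+(0,1):ℤ×ℤ) = (-3,0) from by decide]; exact nmemP0)

lemma ev_12_c (hG2 : IsG2 Hα Hβ X) : ⁅X (3,2), X (0,1)⁆ = 0 :=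
  hG2.bracket_xx_zero (3,2) memP10 (0,1) memP2 (by decide)
    (by rw [show ((3,2)+(0,1):ℤ×ℤ) = (3,3) from by decide]; exact nmemP10)

lemma ev_13_c (hG2 : IsG2 Hα Hβ X) : ⁅X (-3,-2), X (0,1)⁆ = (1:ℂ) • X (-3,-1) := by
  have h := hG2.bracket_xx (-3,-2) memP11 (0,1) memP2
    (by rw [show ((-3,-2)+(0,1):ℤ×ℤ) = (-3,-1) from by decide]; exact memP9)
  rw [show ((-3,-2)+(0,1):ℤ×ℤ) = (-3,-1) from by decide] at h
  rw [h, show Nc (-3,-2) (0,1) = 1 from by decide]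
  norm_num

lemma ev_0_d (hG2 : IsG2 Hα Hβ X) : ⁅Hα, X (3,2)⁆ = (0:ℂ) • X (3,2) := by
  have h := hG2.bracket_hx (1,0) memP0 (3,2) memP10
  rw [HrA,
    show ((cart (1,0) (3,2) : ℚ) : ℂ) = (0:ℂ) from by norm_num [cart, ip]] at h
  exact h

lemma ev_1_d (hG2 : IsG2 Hα Hβ X) : ⁅Hβ, X (3,2)⁆ = (1:ℂ) • X (3,2) := by
  have h := hG2.bracket_hx (0,1) memP2 (3,2) memP10
  rw [HrB,
    show ((cart (0,1) (3,2) : ℚ) : ℂ) = (1:ℂ) from by norm_num [cart, ip]] at h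
  exact h

lemma ev_2_d (hG2 : IsG2 Hα Hβ X) : ⁅X (1,0), X (3,2)⁆ = 0 :=
  hG2.bracket_xx_zero (1,0) memP0 (3,2) memP10 (by decide)
    (by rw [show ((1,0)+(3,2):ℤ×ℤ) = (4,2) from by decide]; exact nmemP12)

lemma ev_3_d (hG2 : IsG2 Hα Hβ X) : ⁅X (-1,0), X (3,2)⁆ = 0 :=
  hG2.bracket_xx_zero (-1,0) memP1 (3,2) memP10 (by decide)
    (by rw [show ((-1,0)+(3,2):ℤ×ℤ) = (2,2) from by decide]; exact nmemP8)

lemma ev_4_d (hG2 : IsG2 Hα Hβ X) : ⁅X (0,1), X (3,2)⁆ = 0 :=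
  hG2.bracket_xx_zero (0,1) memP2 (3,2) memP10 (by decide)
    (by rw [show ((0,1)+(3,2):ℤ×ℤ) = (3,3) from by decide]; exact nmemP10)

lemma ev_5_d (hG2 : IsG2 Hα Hβ X) : ⁅X (0,-1), X (3,2)⁆ = (1:ℂ) • X (3,1) := by
  have h := hG2.bracket_xx (0,-1) memP3 (3,2) memP10
    (by rw [show ((0,-1)+(3,2):ℤ×ℤ) = (3,1) from by decide]; exact memP8)
  rw [show ((0,-1)+(3,2):ℤ×ℤ) = (3,1) from by decide] at h
  rw [h, show Nc (0,-1) (3,2) = 1 from by decide]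
  norm_num

lemma ev_6_d (hG2 : IsG2 Hα Hβ X) : ⁅X (1,1), X (3,2)⁆ = 0 :=
  hG2.bracket_xx_zero (1,1) memP4 (3,2) memP10 (by decide)
    (by rw [show ((1,1)+(3,2):ℤ×ℤ) = (4,3) from by decide]; exact nmemP13)

lemma ev_7_d (hG2 : IsG2 Hα Hβ X) : ⁅X (-1,-1), X (3,2)⁆ = (1:ℂ) • X (2,1) := by
  have h := hG2.bracket_xx (-1,-1) memP5 (3,2) memP10
    (by rw [show ((-1,-1)+(3,2):ℤ×ℤ) = (2,1) from by decide]; exact memP6)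
  rw [show ((-1,-1)+(3,2):ℤ×ℤ) = (2,1) from by decide] at h
  rw [h, show Nc (-1,-1) (3,2) = 1 from by decide]
  norm_num

lemma ev_8_d (hG2 : IsG2 Hα Hβ X) : ⁅X (2,1), X (3,2)⁆ = 0 :=
  hG2.bracket_xx_zero (2,1) memP6 (3,2) memP10 (by decide)
    (by rw [show ((2,1)+(3,2):ℤ×ℤ) = (5,3) from by decide]; exact nmemP15)

lemma ev_9_d (hG2 : IsG2 Hα Hβ X) : ⁅X (-2,-1), X (3,2)⁆ = (-1:ℂ) • X (1,1) := by
  have h := hG2.bracket_xx (-2,-1) memP7 (3,2) memP10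
    (by rw [show ((-2,-1)+(3,2):ℤ×ℤ) = (1,1) from by decide]; exact memP4)
  rw [show ((-2,-1)+(3,2):ℤ×ℤ) = (1,1) from by decide] at h
  rw [h, show Nc (-2,-1) (3,2) = -1 from by decide]
  norm_num

lemma ev_10_d (hG2 : IsG2 Hα Hβ X) : ⁅X (3,1), X (3,2)⁆ = 0 :=
  hG2.bracket_xx_zero (3,1) memP8 (3,2) memP10 (by decide)
    (by rw [show ((3,1)+(3,2):ℤ×ℤ) = (6,3) from by decide]; exact nmemP17)

lemma ev_11_d (hG2 : IsG2 Hα Hβ X) : ⁅X (-3,-1), X (3,2)⁆ = (-1:ℂ) • X (0,1) := by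
  have h := hG2.bracket_xx (-3,-1) memP9 (3,2) memP10
    (by rw [show ((-3,-1)+(3,2):ℤ×ℤ) = (0,1) from by decide]; exact memP2)
  rw [show ((-3,-1)+(3,2):ℤ×ℤ) = (0,1) from by decide] at h
  rw [h, show Nc (-3,-1) (3,2) = -1 from by decide]
  norm_num

lemma ev_12_d (hG2 : IsG2 Hα Hβ X) : ⁅X (3,2), X (3,2)⁆ = 0 :=
  hG2.bracket_xx_zero (3,2) memP10 (3,2) memP10 (by decide)
    (by rw [show ((3,2)+(3,2):ℤ×ℤ) = (6,4) from by decide]; exact nmemP18)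

lemma ev_13_d (hG2 : IsG2 Hα Hβ X) : ⁅X (-3,-2), X (3,2)⁆ = (-1:ℂ) • Hα + (-2:ℂ) • Hβ := by
  have h := hG2.bracket_xnegx (-3,-2) memP11
  rw [show (-((-3,-2)):ℤ×ℤ) = ((3,2):ℤ×ℤ) from by decide] at h
  rw [h]
  norm_num [Hr, ip]
  all_goals module

lemma adm1u (hG2 : IsG2 Hα Hβ X) :
    ∀ x : L, ⁅x, X (1,0)⁆ ∈ Submodule.span ℂ ({Hα, Hβ, X (1,0), X (0,-1), X (1,1), X (-1,-1), X (2,1), X (-2,-1), X (3,1), X (3,2)} : Set L) := by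
  apply ad_mem hG2
  intro y hy
  rw [range_chev] at hy
  simp only [Set.mem_insert_iff, Set.mem_singleton_iff] at hy
  rcases hy with rfl|rfl|rfl|rfl|rfl|rfl|rfl|rfl|rfl|rfl|rfl|rfl|rfl|rfl
  · rw [ev_0_a hG2]
    exact Submodule.smul_mem _ _ (Submodule.subset_span (by simp))
  · rw [ev_1_a hG2]
    exact Submodule.smul_mem _ _ (Submodule.subset_span (by simp))
  · rw [ev_2_a hG2]
    exact zero_mem _
  · rw [ev_3_a hG2]
    exact add_mem (Submodule.smul_mem _ _ (Submodule.subset_span (by simp)))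
      (Submodule.smul_mem _ _ (Submodule.subset_span (by simp)))
  · rw [ev_4_a hG2]
    exact Submodule.smul_mem _ _ (Submodule.subset_span (by simp))
  · rw [ev_5_a hG2]
    exact zero_mem _
  · rw [ev_6_a hG2]
    exact Submodule.smul_mem _ _ (Submodule.subset_span (by simp))
  · rw [ev_7_a hG2]
    exact Submodule.smul_mem _ _ (Submodule.subset_span (by simp))
  · rw [ev_8_a hG2]
    exact Submodule.smul_mem _ _ (Submodule.subset_span (by simp))
  · rw [ev_9_a hG2]
    exact Submodule.smul_mem _ _ (Submodule.subset_span (by simp))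
  · rw [ev_10_a hG2]
    exact zero_mem _
  · rw [ev_11_a hG2]
    exact Submodule.smul_mem _ _ (Submodule.subset_span (by simp))
  · rw [ev_12_a hG2]
    exact zero_mem _
  · rw [ev_13_a hG2]
    exact zero_mem _

lemma adm1v (hG2 : IsG2 Hα Hβ X) :
    ∀ x : L, ⁅x, X (3,1)⁆ ∈ Submodule.span ℂ ({Hα, Hβ, X (1,0), X (0,-1), X (1,1), X (-1,-1), X (2,1), X (-2,-1), X (3,1), X (3,2)} : Set L) := by
  apply ad_mem hG2
  intro y hy
  rw [range_chev] at hy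
  simp only [Set.mem_insert_iff, Set.mem_singleton_iff] at hy
  rcases hy with rfl|rfl|rfl|rfl|rfl|rfl|rfl|rfl|rfl|rfl|rfl|rfl|rfl|rfl
  · rw [ev_0_b hG2]
    exact Submodule.smul_mem _ _ (Submodule.subset_span (by simp))
  · rw [ev_1_b hG2]
    exact Submodule.smul_mem _ _ (Submodule.subset_span (by simp))
  · rw [ev_2_b hG2]
    exact zero_mem _
  · rw [ev_3_b hG2]
    exact Submodule.smul_mem _ _ (Submodule.subset_span (by simp))
  · rw [ev_4_b hG2]
    exact Submodule.smul_mem _ _ (Submodule.subset_span (by simp))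
  · rw [ev_5_b hG2]
    exact zero_mem _
  · rw [ev_6_b hG2]
    exact zero_mem _
  · rw [ev_7_b hG2]
    exact zero_mem _
  · rw [ev_8_b hG2]
    exact zero_mem _
  · rw [ev_9_b hG2]
    exact Submodule.smul_mem _ _ (Submodule.subset_span (by simp))
  · rw [ev_10_b hG2]
    exact zero_mem _
  · rw [ev_11_b hG2]
    exact add_mem (Submodule.smul_mem _ _ (Submodule.subset_span (by simp)))
      (Submodule.smul_mem _ _ (Submodule.subset_span (by simp)))
  · rw [ev_12_b hG2]
    exact zero_mem _
  · rw [ev_13_b hG2]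
    exact Submodule.smul_mem _ _ (Submodule.subset_span (by simp))

lemma bspan1 (hG2 : IsG2 Hα Hβ X) :
    bspan (Submodule.span ℂ ({X (1,0), X (3,1)} : Set L)) = Submodule.span ℂ ({Hα, Hβ, X (1,0), X (0,-1), X (1,1), X (-1,-1), X (2,1), X (-2,-1), X (3,1), X (3,2)} : Set L) := by
  apply le_antisymm
  · rw [bspan]
    apply Submodule.span_le.2
    rintro z ⟨x, w, hw, rfl⟩
    rcases Submodule.mem_span_pair.1 hw with ⟨c, d, rfl⟩
    rw [lie_add, lie_smul, lie_smul]
    exact add_mem (Submodule.smul_mem _ _ (adm1u hG2 x)) (Submodule.smul_mem _ _ (adm1v hG2 x))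
  · apply Submodule.span_le.2
    have gu : X (1,0) ∈ Submodule.span ℂ ({X (1,0), X (3,1)} : Set L) := Submodule.subset_span (by simp)
    have gv : X (3,1) ∈ Submodule.span ℂ ({X (1,0), X (3,1)} : Set L) := Submodule.subset_span (by simp)
    have gen : ∀ x w : L, w ∈ Submodule.span ℂ ({X (1,0), X (3,1)} : Set L) →
        ⁅x, w⁆ ∈ bspan (Submodule.span ℂ ({X (1,0), X (3,1)} : Set L)) :=
      fun x w hw => Submodule.subset_span ⟨x, w, hw, rfl⟩
    rintro z hz
    have m0 : Hα ∈ bspan (Submodule.span ℂ ({X (1,0), X (3,1)} : Set L)) := by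
      have e : Hα = (-1:ℂ) • ⁅X (-1,0), X (1,0)⁆ := by
        rw [ev_3_a hG2]
        module
      have m := (Submodule.smul_mem _ ((-1:ℂ)) (gen (X (-1,0)) _ gu))
      rwa [← e] at m
    have m1 : Hβ ∈ bspan (Submodule.span ℂ ({X (1,0), X (3,1)} : Set L)) := by
      have e : Hβ = (-1:ℂ) • ⁅X (-3,-1), X (3,1)⁆ + (1:ℂ) • ⁅X (-1,0), X (1,0)⁆ := by
        rw [ev_11_b hG2, ev_3_a hG2]
        module
      have m := add_mem (Submodule.smul_mem _ ((-1:ℂ)) (gen (X (-3,-1)) _ gv)) (Submodule.smul_mem _ ((1:ℂ)) (gen (X (-1,0)) _ gu))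
      rwa [← e] at m
    have m2 : X (1,0) ∈ bspan (Submodule.span ℂ ({X (1,0), X (3,1)} : Set L)) := by
      have e : X (1,0) = (-1:ℂ) • ⁅X (-2,-1), X (3,1)⁆ := by
        rw [ev_9_b hG2]
        module
      have m := (Submodule.smul_mem _ ((-1:ℂ)) (gen (X (-2,-1)) _ gv))
      rwa [← e] at m
    have m3 : X (0,-1) ∈ bspan (Submodule.span ℂ ({X (1,0), X (3,1)} : Set L)) := by
      have e : X (0,-1) = (-1:ℂ) • ⁅X (-3,-2), X (3,1)⁆ := by
        rw [ev_13_b hG2]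
        module
      have m := (Submodule.smul_mem _ ((-1:ℂ)) (gen (X (-3,-2)) _ gv))
      rwa [← e] at m
    have m4 : X (1,1) ∈ bspan (Submodule.span ℂ ({X (1,0), X (3,1)} : Set L)) := by
      have e : X (1,1) = (1:ℂ) • ⁅X (0,1), X (1,0)⁆ := by
        rw [ev_4_a hG2]
        module
      have m := (Submodule.smul_mem _ ((1:ℂ)) (gen (X (0,1)) _ gu))
      rwa [← e] at m
    have m5 : X (-1,-1) ∈ bspan (Submodule.span ℂ ({X (1,0), X (3,1)} : Set L)) := by
      have e : X (-1,-1) = (-(1/2) : ℂ) • ⁅X (-2,-1), X (1,0)⁆ := by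
        rw [ev_9_a hG2]
        module
      have m := (Submodule.smul_mem _ ((-(1/2) : ℂ)) (gen (X (-2,-1)) _ gu))
      rwa [← e] at m
    have m6 : X (2,1) ∈ bspan (Submodule.span ℂ ({X (1,0), X (3,1)} : Set L)) := by
      have e : X (2,1) = (1:ℂ) • ⁅X (-1,0), X (3,1)⁆ := by
        rw [ev_3_b hG2]
        module
      have m := (Submodule.smul_mem _ ((1:ℂ)) (gen (X (-1,0)) _ gv))
      rwa [← e] at m
    have m7 : X (-2,-1) ∈ bspan (Submodule.span ℂ ({X (1,0), X (3,1)} : Set L)) := by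
      have e : X (-2,-1) = (1:ℂ) • ⁅X (-3,-1), X (1,0)⁆ := by
        rw [ev_11_a hG2]
        module
      have m := (Submodule.smul_mem _ ((1:ℂ)) (gen (X (-3,-1)) _ gu))
      rwa [← e] at m
    have m8 : X (3,1) ∈ bspan (Submodule.span ℂ ({X (1,0), X (3,1)} : Set L)) := by
      have e : X (3,1) = (-(1/3) : ℂ) • ⁅X (2,1), X (1,0)⁆ := by
        rw [ev_8_a hG2]
        module
      have m := (Submodule.smul_mem _ ((-(1/3) : ℂ)) (gen (X (2,1)) _ gu))
      rwa [← e] at m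
    have m9 : X (3,2) ∈ bspan (Submodule.span ℂ ({X (1,0), X (3,1)} : Set L)) := by
      have e : X (3,2) = (1:ℂ) • ⁅X (0,1), X (3,1)⁆ := by
        rw [ev_4_b hG2]
        module
      have m := (Submodule.smul_mem _ ((1:ℂ)) (gen (X (0,1)) _ gv))
      rwa [← e] at m
    simp only [Set.mem_insert_iff, Set.mem_singleton_iff] at hz
    rcases hz with rfl|rfl|rfl|rfl|rfl|rfl|rfl|rfl|rfl|rfl <;> assumption

lemma fr1 (hG2 : IsG2 Hα Hβ X) :
    Module.finrank ℂ (bspan (Submodule.span ℂ ({X (1,0), X (3,1)} : Set L))) = 10 := by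
  rw [bspan1 hG2]
  rw [show ({Hα, Hβ, X (1,0), X (0,-1), X (1,1), X (-1,-1), X (2,1), X (-2,-1), X (3,1), X (3,2)} : Set L) = Set.range ![Hα, Hβ, X (1,0), X (0,-1), X (1,1), X (-1,-1), X (2,1), X (-2,-1), X (3,1), X (3,2)] from by
    ext x; simp [Matrix.range_cons, Matrix.range_empty]; tauto]
  rw [show (![Hα, Hβ, X (1,0), X (0,-1), X (1,1), X (-1,-1), X (2,1), X (-2,-1), X (3,1), X (3,2)] : Fin 10 → L) = (chev Hα Hβ X) ∘ (![0, 1, 2, 5, 6, 7, 8, 9, 10, 12] : Fin 10 → Fin 14) from by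
    funext k; fin_cases k <;> rfl]
  rw [finrank_span_eq_card (hG2.indep.comp _ (by decide))]
  simp

lemma pr1 (hG2 : IsG2 Hα Hβ X) :
    Module.finrank ℂ (Submodule.span ℂ ({X (1,0), X (3,1)} : Set L)) = 2 := by
  rw [show ({X (1,0), X (3,1)} : Set L) = Set.range ![X (1,0), X (3,1)] from by
    ext x; simp [Matrix.range_cons, Matrix.range_empty]; tauto]
  rw [show (![X (1,0), X (3,1)] : Fin 2 → L) = (chev Hα Hβ X) ∘ (![2,10] : Fin 2 → Fin 14) from by
    funext k; fin_cases k <;> rfl]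
  rw [finrank_span_eq_card (hG2.indep.comp _ (by decide))]
  simp

lemma ab1 (hG2 : IsG2 Hα Hβ X) :
    ∀ x ∈ Submodule.span ℂ ({X (1,0), X (3,1)} : Set L), ∀ y ∈ Submodule.span ℂ ({X (1,0), X (3,1)} : Set L), ⁅x, y⁆ = (0:L) := by
  have huv : ⁅X (1,0), X (3,1)⁆ = 0 := ev_2_b hG2
  have hvu : ⁅X (3,1), X (1,0)⁆ = 0 := ev_10_a hG2
  intro x hx y hy
  rcases Submodule.mem_span_pair.1 hx with ⟨c, d, rfl⟩
  rcases Submodule.mem_span_pair.1 hy with ⟨e, f, rfl⟩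
  simp [add_lie, lie_add, smul_lie, lie_smul, huv, hvu]

lemma adm2u (hG2 : IsG2 Hα Hβ X) :
    ∀ x : L, ⁅x, X (0,1)⁆ ∈ Submodule.span ℂ ({Hα, Hβ, X (-1,0), X (0,1), X (1,1), X (2,1), X (3,1), X (-3,-1), X (3,2)} : Set L) := by
  apply ad_mem hG2
  intro y hy
  rw [range_chev] at hy
  simp only [Set.mem_insert_iff, Set.mem_singleton_iff] at hy
  rcases hy with rfl|rfl|rfl|rfl|rfl|rfl|rfl|rfl|rfl|rfl|rfl|rfl|rfl|rfl
  · rw [ev_0_c hG2]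
    exact Submodule.smul_mem _ _ (Submodule.subset_span (by simp))
  · rw [ev_1_c hG2]
    exact Submodule.smul_mem _ _ (Submodule.subset_span (by simp))
  · rw [ev_2_c hG2]
    exact Submodule.smul_mem _ _ (Submodule.subset_span (by simp))
  · rw [ev_3_c hG2]
    exact zero_mem _
  · rw [ev_4_c hG2]
    exact zero_mem _
  · rw [ev_5_c hG2]
    exact add_mem (Submodule.smul_mem _ _ (Submodule.subset_span (by simp)))
      (Submodule.smul_mem _ _ (Submodule.subset_span (by simp)))
  · rw [ev_6_c hG2]
    exact zero_mem _
  · rw [ev_7_c hG2]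
    exact Submodule.smul_mem _ _ (Submodule.subset_span (by simp))
  · rw [ev_8_c hG2]
    exact zero_mem _
  · rw [ev_9_c hG2]
    exact zero_mem _
  · rw [ev_10_c hG2]
    exact Submodule.smul_mem _ _ (Submodule.subset_span (by simp))
  · rw [ev_11_c hG2]
    exact zero_mem _
  · rw [ev_12_c hG2]
    exact zero_mem _
  · rw [ev_13_c hG2]
    exact Submodule.smul_mem _ _ (Submodule.subset_span (by simp))

lemma adm2v (hG2 : IsG2 Hα Hβ X) :
    ∀ x : L, ⁅x, X (3,2)⁆ ∈ Submodule.span ℂ ({Hα, Hβ, X (-1,0), X (0,1), X (1,1), X (2,1), X (3,1), X (-3,-1), X (3,2)} : Set L) := by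
  apply ad_mem hG2
  intro y hy
  rw [range_chev] at hy
  simp only [Set.mem_insert_iff, Set.mem_singleton_iff] at hy
  rcases hy with rfl|rfl|rfl|rfl|rfl|rfl|rfl|rfl|rfl|rfl|rfl|rfl|rfl|rfl
  · rw [ev_0_d hG2]
    exact Submodule.smul_mem _ _ (Submodule.subset_span (by simp))
  · rw [ev_1_d hG2]
    exact Submodule.smul_mem _ _ (Submodule.subset_span (by simp))
  · rw [ev_2_d hG2]
    exact zero_mem _
  · rw [ev_3_d hG2]
    exact zero_mem _
  · rw [ev_4_d hG2]
    exact zero_mem _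
  · rw [ev_5_d hG2]
    exact Submodule.smul_mem _ _ (Submodule.subset_span (by simp))
  · rw [ev_6_d hG2]
    exact zero_mem _
  · rw [ev_7_d hG2]
    exact Submodule.smul_mem _ _ (Submodule.subset_span (by simp))
  · rw [ev_8_d hG2]
    exact zero_mem _
  · rw [ev_9_d hG2]
    exact Submodule.smul_mem _ _ (Submodule.subset_span (by simp))
  · rw [ev_10_d hG2]
    exact zero_mem _
  · rw [ev_11_d hG2]
    exact Submodule.smul_mem _ _ (Submodule.subset_span (by simp))
  · rw [ev_12_d hG2]
    exact zero_mem _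
  · rw [ev_13_d hG2]
    exact add_mem (Submodule.smul_mem _ _ (Submodule.subset_span (by simp)))
      (Submodule.smul_mem _ _ (Submodule.subset_span (by simp)))

lemma bspan2 (hG2 : IsG2 Hα Hβ X) :
    bspan (Submodule.span ℂ ({X (0,1), X (3,2)} : Set L)) = Submodule.span ℂ ({Hα, Hβ, X (-1,0), X (0,1), X (1,1), X (2,1), X (3,1), X (-3,-1), X (3,2)} : Set L) := by
  apply le_antisymm
  · rw [bspan]
    apply Submodule.span_le.2
    rintro z ⟨x, w, hw, rfl⟩
    rcases Submodule.mem_span_pair.1 hw with ⟨c, d, rfl⟩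
    rw [lie_add, lie_smul, lie_smul]
    exact add_mem (Submodule.smul_mem _ _ (adm2u hG2 x)) (Submodule.smul_mem _ _ (adm2v hG2 x))
  · apply Submodule.span_le.2
    have gu : X (0,1) ∈ Submodule.span ℂ ({X (0,1), X (3,2)} : Set L) := Submodule.subset_span (by simp)
    have gv : X (3,2) ∈ Submodule.span ℂ ({X (0,1), X (3,2)} : Set L) := Submodule.subset_span (by simp)
    have gen : ∀ x w : L, w ∈ Submodule.span ℂ ({X (0,1), X (3,2)} : Set L) →
        ⁅x, w⁆ ∈ bspan (Submodule.span ℂ ({X (0,1), X (3,2)} : Set L)) :=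
      fun x w hw => Submodule.subset_span ⟨x, w, hw, rfl⟩
    rintro z hz
    have m0 : Hα ∈ bspan (Submodule.span ℂ ({X (0,1), X (3,2)} : Set L)) := by
      have e : Hα = (-1:ℂ) • ⁅X (-3,-2), X (3,2)⁆ + (2:ℂ) • ⁅X (0,-1), X (0,1)⁆ := by
        rw [ev_13_d hG2, ev_5_c hG2]
        module
      have m := add_mem (Submodule.smul_mem _ ((-1:ℂ)) (gen (X (-3,-2)) _ gv)) (Submodule.smul_mem _ ((2:ℂ)) (gen (X (0,-1)) _ gu))
      rwa [← e] at m
    have m1 : Hβ ∈ bspan (Submodule.span ℂ ({X (0,1), X (3,2)} : Set L)) := by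
      have e : Hβ = (-1:ℂ) • ⁅X (0,-1), X (0,1)⁆ := by
        rw [ev_5_c hG2]
        module
      have m := (Submodule.smul_mem _ ((-1:ℂ)) (gen (X (0,-1)) _ gu))
      rwa [← e] at m
    have m2 : X (-1,0) ∈ bspan (Submodule.span ℂ ({X (0,1), X (3,2)} : Set L)) := by
      have e : X (-1,0) = (1:ℂ) • ⁅X (-1,-1), X (0,1)⁆ := by
        rw [ev_7_c hG2]
        module
      have m := (Submodule.smul_mem _ ((1:ℂ)) (gen (X (-1,-1)) _ gu))
      rwa [← e] at m
    have m3 : X (0,1) ∈ bspan (Submodule.span ℂ ({X (0,1), X (3,2)} : Set L)) := by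
      have e : X (0,1) = (-1:ℂ) • ⁅X (-3,-1), X (3,2)⁆ := by
        rw [ev_11_d hG2]
        module
      have m := (Submodule.smul_mem _ ((-1:ℂ)) (gen (X (-3,-1)) _ gv))
      rwa [← e] at m
    have m4 : X (1,1) ∈ bspan (Submodule.span ℂ ({X (0,1), X (3,2)} : Set L)) := by
      have e : X (1,1) = (-1:ℂ) • ⁅X (1,0), X (0,1)⁆ := by
        rw [ev_2_c hG2]
        module
      have m := (Submodule.smul_mem _ ((-1:ℂ)) (gen (X (1,0)) _ gu))
      rwa [← e] at m
    have m5 : X (2,1) ∈ bspan (Submodule.span ℂ ({X (0,1), X (3,2)} : Set L)) := by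
      have e : X (2,1) = (1:ℂ) • ⁅X (-1,-1), X (3,2)⁆ := by
        rw [ev_7_d hG2]
        module
      have m := (Submodule.smul_mem _ ((1:ℂ)) (gen (X (-1,-1)) _ gv))
      rwa [← e] at m
    have m6 : X (3,1) ∈ bspan (Submodule.span ℂ ({X (0,1), X (3,2)} : Set L)) := by
      have e : X (3,1) = (1:ℂ) • ⁅X (0,-1), X (3,2)⁆ := by
        rw [ev_5_d hG2]
        module
      have m := (Submodule.smul_mem _ ((1:ℂ)) (gen (X (0,-1)) _ gv))
      rwa [← e] at m
    have m7 : X (-3,-1) ∈ bspan (Submodule.span ℂ ({X (0,1), X (3,2)} : Set L)) := by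
      have e : X (-3,-1) = (1:ℂ) • ⁅X (-3,-2), X (0,1)⁆ := by
        rw [ev_13_c hG2]
        module
      have m := (Submodule.smul_mem _ ((1:ℂ)) (gen (X (-3,-2)) _ gu))
      rwa [← e] at m
    have m8 : X (3,2) ∈ bspan (Submodule.span ℂ ({X (0,1), X (3,2)} : Set L)) := by
      have e : X (3,2) = (-1:ℂ) • ⁅X (3,1), X (0,1)⁆ := by
        rw [ev_10_c hG2]
        module
      have m := (Submodule.smul_mem _ ((-1:ℂ)) (gen (X (3,1)) _ gu))
      rwa [← e] at m
    simp only [Set.mem_insert_iff, Set.mem_singleton_iff] at hz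
    rcases hz with rfl|rfl|rfl|rfl|rfl|rfl|rfl|rfl|rfl <;> assumption

lemma fr2 (hG2 : IsG2 Hα Hβ X) :
    Module.finrank ℂ (bspan (Submodule.span ℂ ({X (0,1), X (3,2)} : Set L))) = 9 := by
  rw [bspan2 hG2]
  rw [show ({Hα, Hβ, X (-1,0), X (0,1), X (1,1), X (2,1), X (3,1), X (-3,-1), X (3,2)} : Set L) = Set.range ![Hα, Hβ, X (-1,0), X (0,1), X (1,1), X (2,1), X (3,1), X (-3,-1), X (3,2)] from by
    ext x; simp [Matrix.range_cons, Matrix.range_empty]; tauto]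
  rw [show (![Hα, Hβ, X (-1,0), X (0,1), X (1,1), X (2,1), X (3,1), X (-3,-1), X (3,2)] : Fin 9 → L) = (chev Hα Hβ X) ∘ (![0, 1, 3, 4, 6, 8, 10, 11, 12] : Fin 9 → Fin 14) from by
    funext k; fin_cases k <;> rfl]
  rw [finrank_span_eq_card (hG2.indep.comp _ (by decide))]
  simp

lemma pr2 (hG2 : IsG2 Hα Hβ X) :
    Module.finrank ℂ (Submodule.span ℂ ({X (0,1), X (3,2)} : Set L)) = 2 := by
  rw [show ({X (0,1), X (3,2)} : Set L) = Set.range ![X (0,1), X (3,2)] from by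
    ext x; simp [Matrix.range_cons, Matrix.range_empty]; tauto]
  rw [show (![X (0,1), X (3,2)] : Fin 2 → L) = (chev Hα Hβ X) ∘ (![4,12] : Fin 2 → Fin 14) from by
    funext k; fin_cases k <;> rfl]
  rw [finrank_span_eq_card (hG2.indep.comp _ (by decide))]
  simp

lemma ab2 (hG2 : IsG2 Hα Hβ X) :
    ∀ x ∈ Submodule.span ℂ ({X (0,1), X (3,2)} : Set L), ∀ y ∈ Submodule.span ℂ ({X (0,1), X (3,2)} : Set L), ⁅x, y⁆ = (0:L) := by
  have huv : ⁅X (0,1), X (3,2)⁆ = 0 := ev_4_d hG2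
  have hvu : ⁅X (3,2), X (0,1)⁆ = 0 := ev_12_c hG2
  intro x hx y hy
  rcases Submodule.mem_span_pair.1 hx with ⟨c, d, rfl⟩
  rcases Submodule.mem_span_pair.1 hy with ⟨e, f, rfl⟩
  simp [add_lie, lie_add, smul_lie, lie_smul, huv, hvu]

lemma adm3u (hG2 : IsG2 Hα Hβ X) :
    ∀ x : L, ⁅x, X (1,0)⁆ ∈ Submodule.span ℂ ({Hα, Hβ, X (1,0), X (0,1), X (0,-1), X (1,1), X (-1,-1), X (2,1), X (-2,-1), X (3,1), X (3,2)} : Set L) := by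
  apply ad_mem hG2
  intro y hy
  rw [range_chev] at hy
  simp only [Set.mem_insert_iff, Set.mem_singleton_iff] at hy
  rcases hy with rfl|rfl|rfl|rfl|rfl|rfl|rfl|rfl|rfl|rfl|rfl|rfl|rfl|rfl
  · rw [ev_0_a hG2]
    exact Submodule.smul_mem _ _ (Submodule.subset_span (by simp))
  · rw [ev_1_a hG2]
    exact Submodule.smul_mem _ _ (Submodule.subset_span (by simp))
  · rw [ev_2_a hG2]
    exact zero_mem _
  · rw [ev_3_a hG2]
    exact add_mem (Submodule.smul_mem _ _ (Submodule.subset_span (by simp)))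
      (Submodule.smul_mem _ _ (Submodule.subset_span (by simp)))
  · rw [ev_4_a hG2]
    exact Submodule.smul_mem _ _ (Submodule.subset_span (by simp))
  · rw [ev_5_a hG2]
    exact zero_mem _
  · rw [ev_6_a hG2]
    exact Submodule.smul_mem _ _ (Submodule.subset_span (by simp))
  · rw [ev_7_a hG2]
    exact Submodule.smul_mem _ _ (Submodule.subset_span (by simp))
  · rw [ev_8_a hG2]
    exact Submodule.smul_mem _ _ (Submodule.subset_span (by simp))
  · rw [ev_9_a hG2]
    exact Submodule.smul_mem _ _ (Submodule.subset_span (by simp))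
  · rw [ev_10_a hG2]
    exact zero_mem _
  · rw [ev_11_a hG2]
    exact Submodule.smul_mem _ _ (Submodule.subset_span (by simp))
  · rw [ev_12_a hG2]
    exact zero_mem _
  · rw [ev_13_a hG2]
    exact zero_mem _

lemma adm3v (hG2 : IsG2 Hα Hβ X) :
    ∀ x : L, ⁅x, X (3,2)⁆ ∈ Submodule.span ℂ ({Hα, Hβ, X (1,0), X (0,1), X (0,-1), X (1,1), X (-1,-1), X (2,1), X (-2,-1), X (3,1), X (3,2)} : Set L) := by
  apply ad_mem hG2
  intro y hy
  rw [range_chev] at hy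
  simp only [Set.mem_insert_iff, Set.mem_singleton_iff] at hy
  rcases hy with rfl|rfl|rfl|rfl|rfl|rfl|rfl|rfl|rfl|rfl|rfl|rfl|rfl|rfl
  · rw [ev_0_d hG2]
    exact Submodule.smul_mem _ _ (Submodule.subset_span (by simp))
  · rw [ev_1_d hG2]
    exact Submodule.smul_mem _ _ (Submodule.subset_span (by simp))
  · rw [ev_2_d hG2]
    exact zero_mem _
  · rw [ev_3_d hG2]
    exact zero_mem _
  · rw [ev_4_d hG2]
    exact zero_mem _
  · rw [ev_5_d hG2]
    exact Submodule.smul_mem _ _ (Submodule.subset_span (by simp))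
  · rw [ev_6_d hG2]
    exact zero_mem _
  · rw [ev_7_d hG2]
    exact Submodule.smul_mem _ _ (Submodule.subset_span (by simp))
  · rw [ev_8_d hG2]
    exact zero_mem _
  · rw [ev_9_d hG2]
    exact Submodule.smul_mem _ _ (Submodule.subset_span (by simp))
  · rw [ev_10_d hG2]
    exact zero_mem _
  · rw [ev_11_d hG2]
    exact Submodule.smul_mem _ _ (Submodule.subset_span (by simp))
  · rw [ev_12_d hG2]
    exact zero_mem _
  · rw [ev_13_d hG2]
    exact add_mem (Submodule.smul_mem _ _ (Submodule.subset_span (by simp)))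
      (Submodule.smul_mem _ _ (Submodule.subset_span (by simp)))

lemma bspan3 (hG2 : IsG2 Hα Hβ X) :
    bspan (Submodule.span ℂ ({X (1,0), X (3,2)} : Set L)) = Submodule.span ℂ ({Hα, Hβ, X (1,0), X (0,1), X (0,-1), X (1,1), X (-1,-1), X (2,1), X (-2,-1), X (3,1), X (3,2)} : Set L) := by
  apply le_antisymm
  · rw [bspan]
    apply Submodule.span_le.2
    rintro z ⟨x, w, hw, rfl⟩
    rcases Submodule.mem_span_pair.1 hw with ⟨c, d, rfl⟩
    rw [lie_add, lie_smul, lie_smul]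
    exact add_mem (Submodule.smul_mem _ _ (adm3u hG2 x)) (Submodule.smul_mem _ _ (adm3v hG2 x))
  · apply Submodule.span_le.2
    have gu : X (1,0) ∈ Submodule.span ℂ ({X (1,0), X (3,2)} : Set L) := Submodule.subset_span (by simp)
    have gv : X (3,2) ∈ Submodule.span ℂ ({X (1,0), X (3,2)} : Set L) := Submodule.subset_span (by simp)
    have gen : ∀ x w : L, w ∈ Submodule.span ℂ ({X (1,0), X (3,2)} : Set L) →
        ⁅x, w⁆ ∈ bspan (Submodule.span ℂ ({X (1,0), X (3,2)} : Set L)) :=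
      fun x w hw => Submodule.subset_span ⟨x, w, hw, rfl⟩
    rintro z hz
    have m0 : Hα ∈ bspan (Submodule.span ℂ ({X (1,0), X (3,2)} : Set L)) := by
      have e : Hα = (-1:ℂ) • ⁅X (-1,0), X (1,0)⁆ := by
        rw [ev_3_a hG2]
        module
      have m := (Submodule.smul_mem _ ((-1:ℂ)) (gen (X (-1,0)) _ gu))
      rwa [← e] at m
    have m1 : Hβ ∈ bspan (Submodule.span ℂ ({X (1,0), X (3,2)} : Set L)) := by
      have e : Hβ = (-(1/2) : ℂ) • ⁅X (-3,-2), X (3,2)⁆ + ((1/2) : ℂ) • ⁅X (-1,0), X (1,0)⁆ := by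
        rw [ev_13_d hG2, ev_3_a hG2]
        module
      have m := add_mem (Submodule.smul_mem _ ((-(1/2) : ℂ)) (gen (X (-3,-2)) _ gv)) (Submodule.smul_mem _ (((1/2) : ℂ)) (gen (X (-1,0)) _ gu))
      rwa [← e] at m
    have m2 : X (1,0) ∈ bspan (Submodule.span ℂ ({X (1,0), X (3,2)} : Set L)) := by
      have e : X (1,0) = ((1/2) : ℂ) • ⁅Hα, X (1,0)⁆ := by
        rw [ev_0_a hG2]
        module
      have m := (Submodule.smul_mem _ (((1/2) : ℂ)) (gen (Hα) _ gu))
      rwa [← e] at m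
    have m3 : X (0,1) ∈ bspan (Submodule.span ℂ ({X (1,0), X (3,2)} : Set L)) := by
      have e : X (0,1) = (-1:ℂ) • ⁅X (-3,-1), X (3,2)⁆ := by
        rw [ev_11_d hG2]
        module
      have m := (Submodule.smul_mem _ ((-1:ℂ)) (gen (X (-3,-1)) _ gv))
      rwa [← e] at m
    have m4 : X (0,-1) ∈ bspan (Submodule.span ℂ ({X (1,0), X (3,2)} : Set L)) := by
      have e : X (0,-1) = (-(1/3) : ℂ) • ⁅X (-1,-1), X (1,0)⁆ := by
        rw [ev_7_a hG2]
        module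
      have m := (Submodule.smul_mem _ ((-(1/3) : ℂ)) (gen (X (-1,-1)) _ gu))
      rwa [← e] at m
    have m5 : X (1,1) ∈ bspan (Submodule.span ℂ ({X (1,0), X (3,2)} : Set L)) := by
      have e : X (1,1) = (1:ℂ) • ⁅X (0,1), X (1,0)⁆ := by
        rw [ev_4_a hG2]
        module
      have m := (Submodule.smul_mem _ ((1:ℂ)) (gen (X (0,1)) _ gu))
      rwa [← e] at m
    have m6 : X (-1,-1) ∈ bspan (Submodule.span ℂ ({X (1,0), X (3,2)} : Set L)) := by
      have e : X (-1,-1) = (-(1/2) : ℂ) • ⁅X (-2,-1), X (1,0)⁆ := by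
        rw [ev_9_a hG2]
        module
      have m := (Submodule.smul_mem _ ((-(1/2) : ℂ)) (gen (X (-2,-1)) _ gu))
      rwa [← e] at m
    have m7 : X (2,1) ∈ bspan (Submodule.span ℂ ({X (1,0), X (3,2)} : Set L)) := by
      have e : X (2,1) = (1:ℂ) • ⁅X (-1,-1), X (3,2)⁆ := by
        rw [ev_7_d hG2]
        module
      have m := (Submodule.smul_mem _ ((1:ℂ)) (gen (X (-1,-1)) _ gv))
      rwa [← e] at m
    have m8 : X (-2,-1) ∈ bspan (Submodule.span ℂ ({X (1,0), X (3,2)} : Set L)) := by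
      have e : X (-2,-1) = (1:ℂ) • ⁅X (-3,-1), X (1,0)⁆ := by
        rw [ev_11_a hG2]
        module
      have m := (Submodule.smul_mem _ ((1:ℂ)) (gen (X (-3,-1)) _ gu))
      rwa [← e] at m
    have m9 : X (3,1) ∈ bspan (Submodule.span ℂ ({X (1,0), X (3,2)} : Set L)) := by
      have e : X (3,1) = (1:ℂ) • ⁅X (0,-1), X (3,2)⁆ := by
        rw [ev_5_d hG2]
        module
      have m := (Submodule.smul_mem _ ((1:ℂ)) (gen (X (0,-1)) _ gv))
      rwa [← e] at m
    have m10 : X (3,2) ∈ bspan (Submodule.span ℂ ({X (1,0), X (3,2)} : Set L)) := by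
      have e : X (3,2) = (1:ℂ) • ⁅Hβ, X (3,2)⁆ := by
        rw [ev_1_d hG2]
        module
      have m := (Submodule.smul_mem _ ((1:ℂ)) (gen (Hβ) _ gv))
      rwa [← e] at m
    simp only [Set.mem_insert_iff, Set.mem_singleton_iff] at hz
    rcases hz with rfl|rfl|rfl|rfl|rfl|rfl|rfl|rfl|rfl|rfl|rfl <;> assumption

lemma fr3 (hG2 : IsG2 Hα Hβ X) :
    Module.finrank ℂ (bspan (Submodule.span ℂ ({X (1,0), X (3,2)} : Set L))) = 11 := by
  rw [bspan3 hG2]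
  rw [show ({Hα, Hβ, X (1,0), X (0,1), X (0,-1), X (1,1), X (-1,-1), X (2,1), X (-2,-1), X (3,1), X (3,2)} : Set L) = Set.range ![Hα, Hβ, X (1,0), X (0,1), X (0,-1), X (1,1), X (-1,-1), X (2,1), X (-2,-1), X (3,1), X (3,2)] from by
    ext x; simp [Matrix.range_cons, Matrix.range_empty]; tauto]
  rw [show (![Hα, Hβ, X (1,0), X (0,1), X (0,-1), X (1,1), X (-1,-1), X (2,1), X (-2,-1), X (3,1), X (3,2)] : Fin 11 → L) = (chev Hα Hβ X) ∘ (![0, 1, 2, 4, 5, 6, 7, 8, 9, 10, 12] : Fin 11 → Fin 14) from by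
    funext k; fin_cases k <;> rfl]
  rw [finrank_span_eq_card (hG2.indep.comp _ (by decide))]
  simp

lemma pr3 (hG2 : IsG2 Hα Hβ X) :
    Module.finrank ℂ (Submodule.span ℂ ({X (1,0), X (3,2)} : Set L)) = 2 := by
  rw [show ({X (1,0), X (3,2)} : Set L) = Set.range ![X (1,0), X (3,2)] from by
    ext x; simp [Matrix.range_cons, Matrix.range_empty]; tauto]
  rw [show (![X (1,0), X (3,2)] : Fin 2 → L) = (chev Hα Hβ X) ∘ (![2,12] : Fin 2 → Fin 14) from by
    funext k; fin_cases k <;> rfl]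
  rw [finrank_span_eq_card (hG2.indep.comp _ (by decide))]
  simp

lemma ab3 (hG2 : IsG2 Hα Hβ X) :
    ∀ x ∈ Submodule.span ℂ ({X (1,0), X (3,2)} : Set L), ∀ y ∈ Submodule.span ℂ ({X (1,0), X (3,2)} : Set L), ⁅x, y⁆ = (0:L) := by
  have huv : ⁅X (1,0), X (3,2)⁆ = 0 := ev_2_d hG2
  have hvu : ⁅X (3,2), X (1,0)⁆ = 0 := ev_12_a hG2
  intro x hx y hy
  rcases Submodule.mem_span_pair.1 hx with ⟨c, d, rfl⟩
  rcases Submodule.mem_span_pair.1 hy with ⟨e, f, rfl⟩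
  simp [add_lie, lie_add, smul_lie, lie_smul, huv, hvu]

end Aux
/-- **Theorem.**  The three two-dimensional abelian subalgebras `ℂX_α ⊕ ℂX_{3α+β}`,
`ℂX_β ⊕ ℂX_{3α+2β}`, `ℂX_α ⊕ ℂX_{3α+2β}` of `G₂` are pairwise non-conjugate. -/
theorem two_dimensional_abelian_nilpotent_pairwise_nonconjugate
    (Hα Hβ : L) (X : ℤ × ℤ → L) (hG2 : IsG2 Hα Hβ X) :
    (∀ i, Module.finrank ℂ ↥(abelianPair X i) = 2) ∧
    (∀ i, ∀ x ∈ abelianPair X i, ∀ y ∈ abelianPair X i, ⁅x, y⁆ = (0:L)) ∧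
    (∀ i j, i ≠ j → ¬ ModConj (abelianPair X i) (abelianPair X j)) := by
  refine ⟨?_, ?_, ?_⟩
  · intro i
    fin_cases i
    · exact pr1 hG2
    · exact pr2 hG2
    · exact pr3 hG2
  · intro i
    fin_cases i
    · exact ab1 hG2
    · exact ab2 hG2
    · exact ab3 hG2
  · have key : ∀ k : Fin 3, Module.finrank ℂ (bspan (abelianPair X k)) = ![10, 9, 11] k := by
      intro k
      fin_cases k
      · exact fr1 hG2
      · exact fr2 hG2
      · exact fr3 hG2
    intro i j hij hmc
    have h := modconj_finrank hmc
    rw [key i, key j] at h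
    fin_cases i <;> fin_cases j <;> first
      | exact hij rfl
      | exact absurd h (by decide)

end G2Formal
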